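/- Every odd perfect number n has at least three distinct prime factors, i.e. ω(n) ≥ 3. -/

import Mathlib

open ArithmeticFunction
open scoped ArithmeticFunction.sigma

lemma geom_lt_three {p : ℕ} (hp : 3 ≤ p) (k : ℕ) :
    2 * ∑ i ∈ Finset.range (k + 1), p ^ i < 3 * p ^ k := by
  induction k with
  | zero => simp
  | succ k ih =>
    rw [Finset.sum_range_succ]
    have h3 : 3 * p ^ k ≤ p * p ^ k := Nat.mul_le_mul_right _ hp
    have : p * p ^ k = p ^ (k + 1) := (pow_succ' p k).symm
    nlinarith [pow_pos (by omega : 0 < p) k]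

lemma geom_lt_five {q : ℕ} (hq : 5 ≤ q) (k : ℕ) :
    4 * ∑ i ∈ Finset.range (k + 1), q ^ i < 5 * q ^ k := by
  induction k with
  | zero => simp
  | succ k ih =>
    rw [Finset.sum_range_succ]
    have h5 : 5 * q ^ k ≤ q * q ^ k := Nat.mul_le_mul_right _ hq
    have : q * q ^ k = q ^ (k + 1) := (pow_succ' q k).symm
    nlinarith [pow_pos (by omega : 0 < q) k]

lemma odd_prime_ge_three {p : ℕ} (hp : p.Prime) (hodd : ¬ 2 ∣ p) : 3 ≤ p := by
  have := hp.two_le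
  rcases Nat.lt_or_ge p 3 with h | h
  · interval_cases p
    · exact absurd ⟨1, rfl⟩ hodd
  · exact h

theorem odd_perfect_omega_ge_three (n : ℕ) (hn : 0 < n) (hodd : Odd n)
    (hperf : σ 1 n = 2 * n) :
    3 ≤ n.primeFactors.card := by
  by_contra hlt
  push_neg at hlt
  have hn0 : n ≠ 0 := hn.ne'
  have hodd' : ¬ 2 ∣ n := by
    rw [Nat.two_dvd_ne_zero]
    rcases hodd with ⟨k, hk⟩
    omega
  interval_cases h : n.primeFactors.card
  · -- no prime factors: n = 1
    rw [Finset.card_eq_zero, Nat.primeFactors_eq_empty] at h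
    rcases h with h | h
    · exact hn0 h
    · subst h; simp [sigma_one_apply] at hperf
  · -- one prime factor
    rw [Finset.card_eq_one] at h
    obtain ⟨p, hp⟩ := h
    have hpmem : p ∈ n.primeFactors := by rw [hp]; exact Finset.mem_singleton_self p
    have hpp : p.Prime := Nat.prime_of_mem_primeFactors hpmem
    have hpdvd : p ∣ n := Nat.dvd_of_mem_primeFactors hpmem
    have hp3 : 3 ≤ p := odd_prime_ge_three hpp (fun h2 => hodd' (h2.trans hpdvd))
    have hneq : n = p ^ n.factorization p := by
      conv_lhs => rw [← Nat.factorization_prod_pow_eq_self hn0]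
      rw [Nat.prod_factorization_eq_prod_primeFactors, hp, Finset.prod_singleton]
    set a := n.factorization p with ha
    rw [hneq, sigma_one_apply_prime_pow hpp] at hperf
    have hkey := geom_lt_three hp3 a
    have hn' : n = p ^ a := hneq
    have hpos : 0 < p ^ a := pow_pos hpp.pos a
    omega
  · -- two prime factors
    rw [Finset.card_eq_two] at h
    obtain ⟨p, q, hpq, h⟩ := h
    -- wlog p < q
    wlog hlt' : p < q generalizing p q
    · exact this q p hpq.symm (by rw [h]; exact Finset.pair_comm p q)
        (lt_of_le_of_ne (not_lt.mp hlt') (Ne.symm hpq))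
    have hpmem : p ∈ n.primeFactors := by rw [h]; simp
    have hqmem : q ∈ n.primeFactors := by rw [h]; simp
    have hpp : p.Prime := Nat.prime_of_mem_primeFactors hpmem
    have hqp : q.Prime := Nat.prime_of_mem_primeFactors hqmem
    have hp3 : 3 ≤ p := odd_prime_ge_three hpp
      (fun h2 => hodd' (h2.trans (Nat.dvd_of_mem_primeFactors hpmem)))
    have hq5 : 5 ≤ q := by
      have h4 : 4 ≤ q := by omega
      rcases Nat.lt_or_ge q 5 with h5 | h5
      · interval_cases q
        · norm_num at hqp
      · exact h5
    have hneq : n = p ^ n.factorization p * q ^ n.factorization q := by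
      conv_lhs => rw [← Nat.factorization_prod_pow_eq_self hn0]
      rw [Nat.prod_factorization_eq_prod_primeFactors, h, Finset.prod_pair hpq]
    set a := n.factorization p with ha
    set b := n.factorization q with hb
    have hcop : (p ^ a).Coprime (q ^ b) :=
      ((Nat.coprime_primes hpp hqp).mpr hpq).pow a b
    have hsigma : σ 1 n = σ 1 (p ^ a) * σ 1 (q ^ b) := by
      rw [hneq]
      exact isMultiplicative_sigma.map_mul_of_coprime hcop
    rw [hsigma, sigma_one_apply_prime_pow hpp, sigma_one_apply_prime_pow hqp] at hperf
    have hkp := geom_lt_three hp3 a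
    have hkq := geom_lt_five hq5 b
    have hpos1 : 0 < p ^ a := pow_pos hpp.pos a
    have hpos2 : 0 < q ^ b := pow_pos hqp.pos b
    -- 8 * σ n = (2 * Sp) * (4 * Sq) < 15 p^a q^b = 15 n < 16 n = 8 * 2n
    have hmain : 8 * ((∑ i ∈ Finset.range (a + 1), p ^ i) *
        ∑ i ∈ Finset.range (b + 1), q ^ i) < 15 * (p ^ a * q ^ b) := by
      calc 8 * ((∑ i ∈ Finset.range (a + 1), p ^ i) * ∑ i ∈ Finset.range (b + 1), q ^ i)
          = (2 * ∑ i ∈ Finset.range (a + 1), p ^ i) *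
            (4 * ∑ i ∈ Finset.range (b + 1), q ^ i) := by ring
        _ ≤ (3 * p ^ a) * (4 * ∑ i ∈ Finset.range (b + 1), q ^ i) :=
            Nat.mul_le_mul_right _ hkp.le
        _ < (3 * p ^ a) * (5 * q ^ b) := by
            exact mul_lt_mul_of_pos_left hkq (by positivity)
        _ = 15 * (p ^ a * q ^ b) := by ring
    rw [← hneq] at hmain
    omega
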